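/- Let P be a dcpo, X and Y topological spaces, and suppose Max(P) with the relative Scott topology is homeomorphic to X × Y via a homeomorphism identifying Max(P) = X × Y. If P is an ideal domain, then for each y ∈ Y, the set ↓(X × {y}) is a Scott-closed subset of P and is a domain whose maximal point space is homeomorphic to X. -/

import Mathlib

/-- A subset is Scott open: an upper set inaccessible by directed suprema. -/
def ScottOpen {α : Type*} [Preorder α] (U : Set α) : Prop :=
  IsUpperSet U ∧ ∀ d : Set α, d.Nonempty → DirectedOn (· ≤ ·) d →
    ∀ a : α, IsLUB d a → a ∈ U → (d ∩ U).Nonempty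

/-- A subset is Scott closed: a lower set closed under directed suprema. -/
def ScottClosed {α : Type*} [Preorder α] (C : Set α) : Prop :=
  IsLowerSet C ∧ ∀ d : Set α, d ⊆ C → d.Nonempty → DirectedOn (· ≤ ·) d →
    ∀ a : α, IsLUB d a → a ∈ C

/-- A dcpo: every nonempty directed subset has a supremum. -/
def IsDcpo (α : Type*) [Preorder α] : Prop :=
  ∀ d : Set α, d.Nonempty → DirectedOn (· ≤ ·) d → ∃ a, IsLUB d a

/-- The way-below relation. -/
def WayBelow {α : Type*} [Preorder α] (x y : α) : Prop :=
  ∀ d : Set α, d.Nonempty → DirectedOn (· ≤ ·) d → ∀ a : α, IsLUB d a → y ≤ a →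
    ∃ z ∈ d, x ≤ z

/-- A compact element: one that is way-below itself. -/
def IsCompactElt {α : Type*} [Preorder α] (x : α) : Prop := WayBelow x x

/-- A continuous dcpo (domain). -/
def IsContinuousDcpo (α : Type*) [Preorder α] : Prop :=
  IsDcpo α ∧ ∀ x : α, DirectedOn (· ≤ ·) {y | WayBelow y x} ∧ IsLUB {y | WayBelow y x} x

/-- An algebraic dcpo (algebraic domain). -/
def IsAlgebraicDcpo (α : Type*) [Preorder α] : Prop :=
  IsDcpo α ∧ ∀ x : α, DirectedOn (· ≤ ·) {k | IsCompactElt k ∧ k ≤ x} ∧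
    IsLUB {k | IsCompactElt k ∧ k ≤ x} x

/-- An ideal domain: a continuous dcpo in which every element is compact or maximal. -/
def IsIdealDomain (α : Type*) [Preorder α] : Prop :=
  IsContinuousDcpo α ∧ ∀ x : α, IsCompactElt x ∨ IsMax x

/-- The Scott topology on a preorder. -/
def scottTop (α : Type*) [Preorder α] : TopologicalSpace α where
  IsOpen := ScottOpen
  isOpen_univ := ⟨isUpperSet_univ, fun d hd _ _ _ _ => hd.imp fun x hx => ⟨hx, trivial⟩⟩
  isOpen_inter U V hU hV := by
    refine ⟨hU.1.inter hV.1, fun d hne hdir a ha haUV => ?_⟩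
    obtain ⟨u, hud, huU⟩ := hU.2 d hne hdir a ha haUV.1
    obtain ⟨v, hvd, hvV⟩ := hV.2 d hne hdir a ha haUV.2
    obtain ⟨w, hwd, hw1, hw2⟩ := hdir u hud v hvd
    exact ⟨w, hwd, hU.1 hw1 huU, hV.1 hw2 hvV⟩
  isOpen_sUnion S hS := by
    constructor
    · rintro a b hab ⟨U, hUS, haU⟩
      exact ⟨U, hUS, (hS U hUS).1 hab haU⟩
    · rintro d hne hdir a ha ⟨U, hUS, haU⟩
      obtain ⟨u, hud, huU⟩ := (hS U hUS).2 d hne hdir a ha haU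
      exact ⟨u, hud, U, hUS, huU⟩

/-- The maximal point space of a preorder. -/
abbrev MaxSpace (α : Type*) [Preorder α] := {x : α // IsMax x}

/-- The maximal point space carries the relative Scott topology. -/
instance maxSpaceTop (α : Type*) [Preorder α] : TopologicalSpace (MaxSpace α) :=
  TopologicalSpace.induced Subtype.val (scottTop α)
open Topology

section AuxPre
variable {α : Type*} [Preorder α]

theorem wayBelow_le {x y : α} (h : WayBelow x y) : x ≤ y := by
  obtain ⟨z, hz, hxz⟩ := h {y} ⟨y, rfl⟩
    (fun u hu v hv => ⟨y, rfl, by rw [hu], by rw [hv]⟩) y isLUB_singleton le_rfl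
  rw [Set.mem_singleton_iff] at hz
  exact hz ▸ hxz

theorem wayBelow_mono {x' x y y' : α} (h1 : x' ≤ x) (h : WayBelow x y) (h2 : y ≤ y') :
    WayBelow x' y' := fun d hne hdir a ha hle =>
  (h d hne hdir a ha (h2.trans hle)).imp fun z hz => ⟨hz.1, h1.trans hz.2⟩

theorem scottOpen_Ici {w : α} (hw : IsCompactElt w) : ScottOpen (Set.Ici w) := by
  refine ⟨fun a b hab ha => le_trans ha hab, fun d hne hdir a ha haw => ?_⟩
  obtain ⟨z, hz, hwz⟩ := hw d hne hdir a ha haw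
  exact ⟨z, hz, hwz⟩

theorem wbSet_nonempty {x : α} (h : IsLUB {z | WayBelow z x} x) :
    {z : α | WayBelow z x}.Nonempty := by
  by_contra hemp
  rw [Set.not_nonempty_iff_eq_empty] at hemp
  have hleast : ∀ b : α, x ≤ b := by
    intro b
    refine h.2 fun z hz => ?_
    rw [hemp] at hz
    exact absurd hz (Set.notMem_empty z)
  have hx : WayBelow x x := fun d hne hdir a ha hle =>
    hne.imp fun z hz => ⟨hz, hleast z⟩
  rw [Set.eq_empty_iff_forall_notMem] at hemp
  exact hemp x hx

end AuxPre

section AuxSub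
variable {P : Type*} [PartialOrder P] {C : Set P}

theorem directedOn_image_val {d : Set C} (hdir : DirectedOn (· ≤ ·) d) :
    DirectedOn (· ≤ ·) (Subtype.val '' d) := by
  rintro _ ⟨u, hu, rfl⟩ _ ⟨v, hv, rfl⟩
  obtain ⟨w, hw, h1, h2⟩ := hdir u hu v hv
  exact ⟨w.val, ⟨w, hw, rfl⟩, h1, h2⟩

theorem subLUB (hC : ScottClosed C) (hP : IsDcpo P) {d : Set C} (hne : d.Nonempty)
    (hdir : DirectedOn (· ≤ ·) d) :
    ∃ (a : P) (ha : a ∈ C), IsLUB (Subtype.val '' d) a ∧ IsLUB d ⟨a, ha⟩ := by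
  obtain ⟨a, ha⟩ := hP _ (hne.image _) (directedOn_image_val hdir)
  have haC : a ∈ C := hC.2 _ (by rintro _ ⟨u, hu, rfl⟩; exact u.2) (hne.image _)
    (directedOn_image_val hdir) a ha
  refine ⟨a, haC, ha, ⟨fun z hz => ?_, fun b hb => ?_⟩⟩
  · exact ha.1 ⟨z, hz, rfl⟩
  · exact ha.2 (by rintro _ ⟨u, hu, rfl⟩; exact hb hu)

theorem isLUB_val (hC : ScottClosed C) (hP : IsDcpo P) {d : Set C} (hne : d.Nonempty)
    (hdir : DirectedOn (· ≤ ·) d) {b : C} (hb : IsLUB d b) :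
    IsLUB (Subtype.val '' d) b.val := by
  obtain ⟨a, ha, h1, h2⟩ := subLUB hC hP hne hdir
  have : b = ⟨a, ha⟩ := hb.unique h2
  rw [this]
  exact h1

theorem wayBelow_lift (hC : ScottClosed C) (hP : IsDcpo P) {z x : P} (hz : z ∈ C)
    (hx : x ∈ C) (h : WayBelow z x) : WayBelow (⟨z, hz⟩ : C) ⟨x, hx⟩ := by
  intro d hne hdir b hb hxb
  obtain ⟨w, hw, hzw⟩ := h _ (hne.image _) (directedOn_image_val hdir) b.val
    (isLUB_val hC hP hne hdir hb) hxb
  obtain ⟨w', hw', rfl⟩ := hw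
  exact ⟨w', hw', hzw⟩

theorem dhat (hC : ScottClosed C) (hcont : IsContinuousDcpo P) {x : P} (hx : x ∈ C) :
    {z : C | WayBelow z.val x}.Nonempty ∧ DirectedOn (· ≤ ·) {z : C | WayBelow z.val x} ∧
      IsLUB {z : C | WayBelow z.val x} ⟨x, hx⟩ := by
  obtain ⟨hd, hl⟩ := hcont.2 x
  have hmem : ∀ z : P, WayBelow z x → z ∈ C := fun z hz => hC.1 (wayBelow_le hz) hx
  refine ⟨?_, ?_, ?_, ?_⟩
  · obtain ⟨z, hz⟩ := wbSet_nonempty hl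
    exact ⟨⟨z, hmem z hz⟩, hz⟩
  · intro u hu v hv
    obtain ⟨w, hw, h1, h2⟩ := hd u.val hu v.val hv
    exact ⟨⟨w, hmem w hw⟩, hw, h1, h2⟩
  · exact fun z hz => show z.val ≤ x from wayBelow_le hz
  · intro b hb
    refine hl.2 fun z hz => ?_
    exact hb (show (⟨z, hmem z hz⟩ : C) ∈ _ from hz)

theorem scottOpen_restrict (hC : ScottClosed C) (hP : IsDcpo P) {U : Set P}
    (hU : ScottOpen U) : ScottOpen {q : C | q.val ∈ U} := by
  refine ⟨fun a b hab ha => hU.1 hab ha, fun d hne hdir b hb hbU => ?_⟩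
  obtain ⟨_, ⟨w, hw, rfl⟩, hwU⟩ := hU.2 _ (hne.image _) (directedOn_image_val hdir) b.val
    (isLUB_val hC hP hne hdir hb) hbU
  exact ⟨w, hw, hwU⟩

theorem continuous_val_scott (hC : ScottClosed C) (hP : IsDcpo P) :
    Continuous[scottTop C, scottTop P] (Subtype.val : C → P) := by
  rw [continuous_def]
  intro U hU
  exact scottOpen_restrict hC hP hU

end AuxSub

/-- If `P` is an ideal domain whose maximal point space is identified with
`X × Y` via a homeomorphism `e`, then for each `y ∈ Y` the set `↓(X × {y})` is Scott
closed in `P`, is a domain, and its maximal point space is homeomorphic to `X`. -/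
theorem slice_domain_model {P X Y : Type*} [PartialOrder P]
    [TopologicalSpace X] [TopologicalSpace Y]
    (hP : IsIdealDomain P) (e : MaxSpace P ≃ₜ X × Y) (y : Y) :
    ScottClosed {p : P | ∃ m : MaxSpace P, (e m).2 = y ∧ p ≤ m.val} ∧
    IsContinuousDcpo {p : P | ∃ m : MaxSpace P, (e m).2 = y ∧ p ≤ m.val} ∧
    Nonempty (MaxSpace {p : P | ∃ m : MaxSpace P, (e m).2 = y ∧ p ≤ m.val} ≃ₜ X) := by
  set C : Set P := {p : P | ∃ m : MaxSpace P, (e m).2 = y ∧ p ≤ m.val} with hCdef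
  have hpd : IsDcpo P := hP.1.1
  have hlow : IsLowerSet C := by
    rintro a b hba ⟨m, hm, ham⟩
    exact ⟨m, hm, hba.trans ham⟩
  -- separation of maximal points
  have sep : ∀ m m' : MaxSpace P, m ≠ m' →
      ∃ U : Set P, ScottOpen U ∧ m.val ∈ U ∧ m'.val ∉ U := by
    intro m m' hne
    obtain ⟨hd, hl⟩ := hP.1.2 m.val
    by_cases hall : ∀ z : P, WayBelow z m.val → z ≤ m'.val
    · have hmm' : m.val ≤ m'.val := hl.2 fun z hz => hall z hz
      exact absurd (Subtype.ext (hmm'.antisymm (m.2 hmm'))) hne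
    · push_neg at hall
      obtain ⟨z, hz, hzm'⟩ := hall
      rcases hP.2 z with hc | hmax
      · exact ⟨Set.Ici z, scottOpen_Ici hc, wayBelow_le hz, hzm'⟩
      · have hzle := wayBelow_le hz
        have heq : z = m.val := le_antisymm hzle (hmax hzle)
        rw [← heq] at hz
        exact ⟨Set.Ici z, scottOpen_Ici hz, hzle, hzm'⟩
  have hT1 : T1Space (MaxSpace P) := by
    rw [t1Space_iff_exists_open]
    intro m m' hne
    obtain ⟨U, hU, h1, h2⟩ := sep m m' hne
    exact ⟨Subtype.val ⁻¹' U, ⟨U, hU, rfl⟩, h1, h2⟩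
  have hclosedSm : Nonempty X → IsClosed {m : MaxSpace P | (e m).2 = y} := by
    rintro ⟨x₀⟩
    haveI := hT1
    haveI : T1Space (X × Y) := e.symm.isEmbedding.t1Space
    haveI : T1Space Y := (isEmbedding_prodMkRight x₀).t1Space
    exact (isClosed_singleton (x := y)).preimage (continuous_snd.comp e.continuous)
  -- Part 1 : Scott closedness
  have hCscl : ScottClosed C := by
    refine ⟨hlow, ?_⟩
    intro d hdC hne hdir a ha
    rcases hP.2 a with hc | hmax
    · obtain ⟨p, hpd', hap⟩ := hc d hne hdir a ha le_rfl
      exact hlow hap (hdC hpd')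
    · obtain ⟨p₀, hp₀⟩ := hne
      obtain ⟨m₀, hm₀, _⟩ := hdC hp₀
      have hcl := hclosedSm ⟨(e m₀).1⟩
      have hmem : (⟨a, hmax⟩ : MaxSpace P) ∈ {m : MaxSpace P | (e m).2 = y} := by
        by_contra hno
        obtain ⟨U, hU, hUeq⟩ := hcl.isOpen_compl
        have hU' : ScottOpen U := hU
        have haU : a ∈ U := by
          have h1 : (⟨a, hmax⟩ : MaxSpace P) ∈ {m : MaxSpace P | (e m).2 = y}ᶜ := hno
          rw [← hUeq] at h1
          exact h1
        obtain ⟨p, hpd', hpU⟩ := hU'.2 d ⟨p₀, hp₀⟩ hdir a ha haU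
        obtain ⟨m, hm, hpm⟩ := hdC hpd'
        have : m ∈ {m : MaxSpace P | (e m).2 = y}ᶜ := by
          rw [← hUeq]
          exact hU'.1 hpm hpU
        exact this hm
      exact ⟨⟨a, hmax⟩, hmem, le_rfl⟩
  -- Part 2 : C is a continuous dcpo
  have hCdcpo : IsDcpo C := by
    intro d hne hdir
    obtain ⟨a, ha, _, h2⟩ := subLUB hCscl hpd hne hdir
    exact ⟨⟨a, ha⟩, h2⟩
  have hCcont : IsContinuousDcpo C := by
    refine ⟨hCdcpo, fun x => ?_⟩
    obtain ⟨hDne, hDdir, hDlub⟩ := dhat hCscl hP.1 x.2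
    have hDlub' : IsLUB {z : C | WayBelow z.val x.val} x := hDlub
    have hsub : {z : C | WayBelow z.val x.val} ⊆ {z : C | WayBelow z x} := fun z hz =>
      wayBelow_lift hCscl hpd z.2 x.2 hz
    constructor
    · intro u hu v hv
      obtain ⟨zu, hzu, huzu⟩ := hu _ hDne hDdir x hDlub' le_rfl
      obtain ⟨zv, hzv, hvzv⟩ := hv _ hDne hDdir x hDlub' le_rfl
      obtain ⟨w, hw, h1, h2⟩ := hDdir zu hzu zv hzv
      exact ⟨w, hsub hw, huzu.trans h1, hvzv.trans h2⟩
    · constructor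
      · exact fun z hz => wayBelow_le hz
      · intro b hb
        exact hDlub'.2 fun z hz => hb (hsub hz)
  -- Part 3 : the homeomorphism
  have hsmem : ∀ x : X, ((e.symm (x, y)).val : P) ∈ C := fun x =>
    ⟨e.symm (x, y), by simp, le_rfl⟩
  have hsmax : ∀ x : X, IsMax (⟨(e.symm (x, y)).val, hsmem x⟩ : C) := by
    intro x q hq
    exact (e.symm (x, y)).2 hq
  have maxmem : ∀ c : MaxSpace C, ∃ m : MaxSpace P, m.val = (c.val.val : P) ∧ (e m).2 = y := by
    intro c
    obtain ⟨m, hm, hle⟩ := c.val.2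
    have hmC : (m.val : P) ∈ C := ⟨m, hm, le_rfl⟩
    have h2 : (⟨m.val, hmC⟩ : C) ≤ c.val := c.2 (show c.val ≤ ⟨m.val, hmC⟩ from hle)
    exact ⟨m, le_antisymm h2 hle, hm⟩
  have hmaxP : ∀ c : MaxSpace C, IsMax (c.val.val : P) := by
    intro c
    obtain ⟨m, hmeq, _⟩ := maxmem c
    exact hmeq ▸ m.2
  have hsnd : ∀ c : MaxSpace C, (e ⟨c.val.val, hmaxP c⟩).2 = y := by
    intro c
    obtain ⟨m, hmeq, hm2⟩ := maxmem c
    have h : (⟨(c.val.val : P), hmaxP c⟩ : MaxSpace P) = m := Subtype.ext hmeq.symm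
    rw [h]
    exact hm2
  letI : TopologicalSpace P := scottTop P
  letI : TopologicalSpace (↥C) := scottTop (↥C)
  have hjcont : Continuous (fun c : MaxSpace C => (⟨c.val.val, hmaxP c⟩ : MaxSpace P)) := by
    apply continuous_induced_rng.mpr
    exact (continuous_val_scott hCscl hpd).comp continuous_induced_dom
  have hgP : Continuous (fun x : X => ((e.symm (x, y)).val : P)) := by
    exact continuous_induced_dom.comp (e.symm.continuous.comp (continuous_id.prodMk continuous_const))
  have hψcont : Continuous (fun x : X =>
      (⟨⟨(e.symm (x, y)).val, hsmem x⟩, hsmax x⟩ : MaxSpace C)) := by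
    apply continuous_induced_rng.mpr
    rw [continuous_def]
    intro U hU
    have hU' : ScottOpen U := hU
    rw [isOpen_iff_forall_mem_open]
    intro x hx
    have hxU : (⟨(e.symm (x, y)).val, hsmem x⟩ : C) ∈ U := hx
    obtain ⟨hDne, hDdir, hDlub⟩ := dhat hCscl hP.1 (hsmem x)
    obtain ⟨zz, hzzD, hzzU⟩ := hU'.2 _ hDne hDdir _ hDlub hxU
    have hzzD' : WayBelow (zz.val : P) ((e.symm (x, y)).val : P) := hzzD
    have hzzle : (zz.val : P) ≤ (e.symm (x, y)).val := wayBelow_le hzzD'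
    have hcomp : IsCompactElt (zz.val : P) := by
      rcases hP.2 (zz.val : P) with hc | hmx
      · exact hc
      · have heq : (zz.val : P) = (e.symm (x, y)).val := le_antisymm hzzle (hmx hzzle)
        rw [← heq] at hzzD'
        exact hzzD'
    refine ⟨(fun x' : X => ((e.symm (x', y)).val : P)) ⁻¹' Set.Ici zz.val, ?_, ?_, hzzle⟩
    · intro x' hx'
      show (⟨(e.symm (x', y)).val, hsmem x'⟩ : C) ∈ U
      exact hU'.1 (show zz ≤ (⟨(e.symm (x', y)).val, hsmem x'⟩ : C) from hx') hzzU
    · exact IsOpen.preimage hgP (scottOpen_Ici hcomp)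
  refine ⟨hCscl, hCcont, ⟨Homeomorph.mk (Equiv.mk
    (fun c : MaxSpace C => (e ⟨c.val.val, hmaxP c⟩).1)
    (fun x : X => (⟨⟨(e.symm (x, y)).val, hsmem x⟩, hsmax x⟩ : MaxSpace C))
    ?_ ?_) ?_ ?_⟩⟩
  · -- left inverse
    intro c
    apply Subtype.ext
    apply Subtype.ext
    show ((e.symm ((e ⟨c.val.val, hmaxP c⟩).1, y)).val : P) = c.val.val
    have h : ((e ⟨c.val.val, hmaxP c⟩).1, y) = e ⟨c.val.val, hmaxP c⟩ := by
      exact Prod.ext rfl (hsnd c).symm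
    rw [h, e.symm_apply_apply]
  · -- right inverse
    intro x
    show (e ⟨(e.symm (x, y)).val, _⟩).1 = x
    have h : (⟨((e.symm (x, y)).val : P), _⟩ : MaxSpace P) = e.symm (x, y) := Subtype.ext rfl
    rw [h, e.apply_symm_apply]
  · exact continuous_fst.comp (e.continuous.comp hjcont)
  · exact hψcont
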